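/- Let n ≥ 1 be an integer and r ≥ 1 a real number such that 2r, rn, and 2rn/(2r+1) are all integers. Then for every integer k with 2rn/(2r+1) ≤ k ≤ rn there exists an (n, n, k)-fractionally balanced tripartite hypergraph whose matching number is at most 2rn/(2r+1). -/

import Mathlib

/-- `f` is a balanced weight function on the tripartite hypergraph `H`:
nonnegative, vanishing outside `H`, with constant degrees on each of the three sides. -/
def TriBalanced {a b c : ℕ} (H : Finset (Fin a × Fin b × Fin c))
    (f : Fin a × Fin b × Fin c → ℝ) : Prop :=
  (∀ e, 0 ≤ f e) ∧ (∀ e, e ∉ H → f e = 0) ∧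
    (∀ v w : Fin a, (∑ e : Fin a × Fin b × Fin c, if e.1 = v then f e else 0) =
      ∑ e : Fin a × Fin b × Fin c, if e.1 = w then f e else 0) ∧
    (∀ v w : Fin b, (∑ e : Fin a × Fin b × Fin c, if e.2.1 = v then f e else 0) =
      ∑ e : Fin a × Fin b × Fin c, if e.2.1 = w then f e else 0) ∧
    (∀ v w : Fin c, (∑ e : Fin a × Fin b × Fin c, if e.2.2 = v then f e else 0) =
      ∑ e : Fin a × Fin b × Fin c, if e.2.2 = w then f e else 0)

/-- `H` is an `(a,b,c)`-fractionally balanced tripartite hypergraph. -/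
def TriFracBalanced {a b c : ℕ} (H : Finset (Fin a × Fin b × Fin c)) : Prop :=
  ∃ f, TriBalanced H f ∧ f ≠ 0

/-- `M` is a matching in `H`: a set of edges of `H` any two distinct members of
which differ in all three coordinates. -/
def TriMatching {a b c : ℕ} (H M : Finset (Fin a × Fin b × Fin c)) : Prop :=
  M ⊆ H ∧ ∀ e ∈ M, ∀ f ∈ M, e ≠ f → e.1 ≠ f.1 ∧ e.2.1 ≠ f.2.1 ∧ e.2.2 ≠ f.2.2



section Aux

/-- indicator-style sum: counting values below `p` -/
lemma bm_sum_if_lt (m p : ℕ) (hp : p ≤ m) (c c' : ℝ) :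
    ∑ z : Fin m, (if z.val < p then c' else c) = p * c' + ((m : ℝ) - p) * c := by
  rw [Fin.sum_univ_eq_sum_range (fun i => if i < p then c' else c) m]
  rw [Finset.range_eq_Ico, ← Finset.sum_Ico_consecutive _ (Nat.zero_le p) hp]
  rw [Finset.sum_congr rfl (fun i hi => if_pos (Finset.mem_Ico.mp hi).2),
      Finset.sum_congr rfl (fun i hi => if_neg (by simpa using Nat.not_lt.mpr (Finset.mem_Ico.mp hi).1))]
  simp [Nat.cast_sub hp]

lemma bm_sum_if_ge (m p : ℕ) (hp : p ≤ m) (c : ℝ) :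
    ∑ z : Fin m, (if p ≤ z.val then c else 0) = ((m : ℝ) - p) * c := by
  have h : ∀ z : Fin m, (if p ≤ z.val then c else 0) = (if z.val < p then 0 else c) := by
    intro z; rcases lt_or_ge z.val p with h | h
    · rw [if_neg (by omega), if_pos h]
    · rw [if_pos h, if_neg (by omega)]
  rw [Finset.sum_congr rfl (fun z _ => h z), bm_sum_if_lt m p hp c 0]
  ring

lemma bm_sum_delta (m j : ℕ) (hj : j < m) (c : ℝ) :
    ∑ x : Fin m, (if x.val = j then c else 0) = c := by
  have h : ∀ x : Fin m, (if x.val = j then c else 0) = if x = ⟨j, hj⟩ then c else 0 := by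
    intro x; simp [Fin.ext_iff]
  rw [Finset.sum_congr rfl (fun x _ => h x), Finset.sum_ite_eq' Finset.univ (⟨j, hj⟩ : Fin m)]
  simp

/-- delta with a guard `j < p`, for `p ≤ m`. -/
lemma bm_sum_delta_guard (m p j : ℕ) (hp : p ≤ m) (c : ℝ) :
    ∑ x : Fin m, (if x.val = j ∧ j < p then c else 0) = if j < p then c else 0 := by
  by_cases h : j < p
  · rw [if_pos h]
    have h' : ∀ x : Fin m, (if x.val = j ∧ j < p then c else 0) = if x.val = j then c else 0 := by
      intro x; by_cases hx : x.val = j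
      · rw [if_pos ⟨hx, h⟩, if_pos hx]
      · rw [if_neg (fun hc => hx hc.1), if_neg hx]
    rw [Finset.sum_congr rfl (fun x _ => h' x), bm_sum_delta m j (lt_of_lt_of_le h hp) c]
  · rw [if_neg h]
    exact Finset.sum_eq_zero (fun x _ => if_neg (fun hc => h hc.2))

/-- same with the equality reversed -/
lemma bm_sum_delta_guard' (m p j : ℕ) (hp : p ≤ m) (c : ℝ) :
    ∑ x : Fin m, (if j = x.val ∧ j < p then c else 0) = if j < p then c else 0 := by
  rw [← bm_sum_delta_guard m p j hp c]
  exact Finset.sum_congr rfl (fun x _ => if_congr (by omega) rfl rfl)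

/-- coupling sum: pairs with equal coordinate below `p`. -/
lemma bm_sum_pair (a b p : ℕ) (hpa : p ≤ a) (hpb : p ≤ b) (c : ℝ) :
    ∑ y : Fin a, ∑ z : Fin b, (if y.val = z.val ∧ y.val < p then c else 0) = p * c := by
  have h : ∀ y : Fin a, (∑ z : Fin b, (if y.val = z.val ∧ y.val < p then c else 0))
      = if y.val < p then c else 0 := by
    intro y
    rw [← bm_sum_delta_guard' b p y.val hpb c]
  rw [Finset.sum_congr rfl (fun y _ => h y), bm_sum_if_lt a p hpa 0 c]
  ring

end Aux

section Construction

variable (p : ℕ) (A C C' : ℝ)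

/-- The weight function: union of `p` triangle families with tips `(i,i,i)`. -/
noncomputable def bmW {n k : ℕ} (e : Fin n × Fin n × Fin k) : ℝ :=
  (if e.1.val = e.2.1.val ∧ e.1.val < p then (1:ℝ) else 0) * (if e.2.2.val < p then C' else C)
  + (if e.2.1.val = e.2.2.val ∧ e.2.1.val < p then (1:ℝ) else 0) * (if p ≤ e.1.val then A else 0)
  + (if e.1.val = e.2.2.val ∧ e.1.val < p then (1:ℝ) else 0) * (if p ≤ e.2.1.val then A else 0)

/-- The hypergraph: edges having two coordinates equal to a common value `< p`. -/
def bmH (n k : ℕ) : Finset (Fin n × Fin n × Fin k) :=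
  Finset.univ.filter (fun e =>
    (e.1.val = e.2.1.val ∧ e.1.val < p) ∨ (e.2.1.val = e.2.2.val ∧ e.2.1.val < p) ∨
    (e.1.val = e.2.2.val ∧ e.1.val < p))

variable {n k : ℕ}

lemma bmW_nonneg (hA : 0 ≤ A) (hC : 0 ≤ C) (hC' : 0 ≤ C') (e : Fin n × Fin n × Fin k) :
    0 ≤ bmW p A C C' e := by
  unfold bmW
  have h1 : (0:ℝ) ≤ (if e.1.val = e.2.1.val ∧ e.1.val < p then (1:ℝ) else 0) := by positivity
  have h2 : (0:ℝ) ≤ (if e.2.2.val < p then C' else C) := by split_ifs <;> assumption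
  have h3 : (0:ℝ) ≤ (if e.2.1.val = e.2.2.val ∧ e.2.1.val < p then (1:ℝ) else 0) := by positivity
  have h4 : (0:ℝ) ≤ (if p ≤ e.1.val then A else 0) := by split_ifs <;> simp [hA]
  have h5 : (0:ℝ) ≤ (if e.1.val = e.2.2.val ∧ e.1.val < p then (1:ℝ) else 0) := by positivity
  have h6 : (0:ℝ) ≤ (if p ≤ e.2.1.val then A else 0) := by split_ifs <;> simp [hA]
  have := add_nonneg (add_nonneg (mul_nonneg h1 h2) (mul_nonneg h3 h4)) (mul_nonneg h5 h6)
  linarith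

lemma bmW_vanish (e : Fin n × Fin n × Fin k) (he : e ∉ bmH p n k) : bmW p A C C' e = 0 := by
  rw [bmH, Finset.mem_filter] at he
  have hne : ¬((e.1.val = e.2.1.val ∧ e.1.val < p) ∨ (e.2.1.val = e.2.2.val ∧ e.2.1.val < p) ∨
      (e.1.val = e.2.2.val ∧ e.1.val < p)) := fun h => he ⟨Finset.mem_univ e, h⟩
  unfold bmW
  rw [if_neg (fun h => hne (Or.inl h)), if_neg (fun h => hne (Or.inr (Or.inl h))),
      if_neg (fun h => hne (Or.inr (Or.inr h)))]
  ring

/-- x-marginal -/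
lemma bm_degX (hpn : p ≤ n) (hpk : p ≤ k)
    (hI : (p:ℝ) * C' + ((k:ℝ) - p) * C + ((n:ℝ) - p) * A = p * A) (v : Fin n) :
    (∑ e : Fin n × Fin n × Fin k, if e.1 = v then bmW p A C C' e else 0) = p * A := by
  rw [Fintype.sum_prod_type]
  have step1 : ∀ x : Fin n, (∑ yz : Fin n × Fin k, if (x, yz).1 = v then bmW p A C C' (x, yz) else 0)
      = if x = v then (∑ yz : Fin n × Fin k, bmW p A C C' (x, yz)) else 0 := by
    intro x; by_cases hx : x = v <;> simp [hx]
  rw [Finset.sum_congr rfl (fun x _ => step1 x), Finset.sum_ite_eq' Finset.univ v, if_pos (Finset.mem_univ v)]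
  rw [Fintype.sum_prod_type]
  unfold bmW
  simp only [Finset.sum_add_distrib]
  have T1 : (∑ y : Fin n, ∑ z : Fin k,
      (if (v, y, z).1.val = (v, y, z).2.1.val ∧ (v, y, z).1.val < p then (1:ℝ) else 0)
        * (if (v, y, z).2.2.val < p then C' else C))
      = (if v.val < p then (1:ℝ) else 0) * ((p:ℝ) * C' + ((k:ℝ) - p) * C) := by
    have inner : ∀ y : Fin n, (∑ z : Fin k,
        (if v.val = y.val ∧ v.val < p then (1:ℝ) else 0) * (if z.val < p then C' else C))
        = (if v.val = y.val ∧ v.val < p then (1:ℝ) else 0) * ((p:ℝ) * C' + ((k:ℝ) - p) * C) := by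
      intro y
      rw [← Finset.mul_sum, bm_sum_if_lt k p hpk C C']
    simp only []
    rw [Finset.sum_congr rfl (fun y _ => inner y), ← Finset.sum_mul,
        bm_sum_delta_guard' n p v.val hpn 1]
  have T2 : (∑ y : Fin n, ∑ z : Fin k,
      (if (v, y, z).2.1.val = (v, y, z).2.2.val ∧ (v, y, z).2.1.val < p then (1:ℝ) else 0)
        * (if p ≤ (v, y, z).1.val then A else 0))
      = (if p ≤ v.val then A else 0) * p := by
    simp only []
    have : ∀ y : Fin n, ∀ z : Fin k,
        (if y.val = z.val ∧ y.val < p then (1:ℝ) else 0) * (if p ≤ v.val then A else 0)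
        = (if y.val = z.val ∧ y.val < p then (if p ≤ v.val then A else 0) else 0) := by
      intro y z; by_cases h : y.val = z.val ∧ y.val < p
      · rw [if_pos h, if_pos h, one_mul]
      · rw [if_neg h, if_neg h, zero_mul]
    rw [Finset.sum_congr rfl (fun y _ => Finset.sum_congr rfl (fun z _ => this y z))]
    rw [bm_sum_pair n k p hpn hpk]
    ring
  have T3 : (∑ y : Fin n, ∑ z : Fin k,
      (if (v, y, z).1.val = (v, y, z).2.2.val ∧ (v, y, z).1.val < p then (1:ℝ) else 0)
        * (if p ≤ (v, y, z).2.1.val then A else 0))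
      = (if v.val < p then (1:ℝ) else 0) * (((n:ℝ) - p) * A) := by
    simp only []
    have inner : ∀ y : Fin n, (∑ z : Fin k,
        (if v.val = z.val ∧ v.val < p then (1:ℝ) else 0) * (if p ≤ y.val then A else 0))
        = (if v.val < p then (1:ℝ) else 0) * (if p ≤ y.val then A else 0) := by
      intro y
      rw [← Finset.sum_mul, bm_sum_delta_guard' k p v.val hpk 1]
    rw [Finset.sum_congr rfl (fun y _ => inner y), ← Finset.mul_sum, bm_sum_if_ge n p hpn A]
  rw [T1, T2, T3]
  by_cases hv : v.val < p
  · rw [if_pos hv, if_neg (by omega)]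
    rw [← hI]; ring
  · rw [if_neg hv, if_pos (by omega)]
    ring

/-- y-marginal -/
lemma bm_degY (hpn : p ≤ n) (hpk : p ≤ k)
    (hI : (p:ℝ) * C' + ((k:ℝ) - p) * C + ((n:ℝ) - p) * A = p * A) (v : Fin n) :
    (∑ e : Fin n × Fin n × Fin k, if e.2.1 = v then bmW p A C C' e else 0) = p * A := by
  rw [Fintype.sum_prod_type]
  have step0 : ∀ x : Fin n, (∑ yz : Fin n × Fin k, if (x, yz).2.1 = v then bmW p A C C' (x, yz) else 0)
      = ∑ z : Fin k, bmW p A C C' (x, v, z) := by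
    intro x
    rw [Fintype.sum_prod_type]
    have : ∀ y : Fin n, (∑ z : Fin k, if (x, y, z).2.1 = v then bmW p A C C' (x, y, z) else 0)
        = if y = v then (∑ z : Fin k, bmW p A C C' (x, y, z)) else 0 := by
      intro y; by_cases hy : y = v <;> simp [hy]
    rw [Finset.sum_congr rfl (fun y _ => this y), Finset.sum_ite_eq' Finset.univ v, if_pos (Finset.mem_univ v)]
  rw [Finset.sum_congr rfl (fun x _ => step0 x)]
  unfold bmW
  simp only [Finset.sum_add_distrib]
  have T1 : (∑ x : Fin n, ∑ z : Fin k,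
      (if (x, v, z).1.val = (x, v, z).2.1.val ∧ (x, v, z).1.val < p then (1:ℝ) else 0)
        * (if (x, v, z).2.2.val < p then C' else C))
      = (if v.val < p then (1:ℝ) else 0) * ((p:ℝ) * C' + ((k:ℝ) - p) * C) := by
    simp only []
    have inner : ∀ x : Fin n, (∑ z : Fin k,
        (if x.val = v.val ∧ x.val < p then (1:ℝ) else 0) * (if z.val < p then C' else C))
        = (if x.val = v.val ∧ x.val < p then (1:ℝ) else 0) * ((p:ℝ) * C' + ((k:ℝ) - p) * C) := by
      intro x; rw [← Finset.mul_sum, bm_sum_if_lt k p hpk C C']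
    rw [Finset.sum_congr rfl (fun x _ => inner x), ← Finset.sum_mul]
    congr 1
    have e1 : ∀ x : Fin n, (if x.val = v.val ∧ x.val < p then (1:ℝ) else 0)
        = (if x.val = v.val ∧ v.val < p then (1:ℝ) else 0) := by
      intro x
      by_cases h : x.val = v.val
      · simp [h]
      · rw [if_neg (fun hc => h hc.1), if_neg (fun hc => h hc.1)]
    rw [Finset.sum_congr rfl (fun x _ => e1 x), bm_sum_delta_guard n p v.val hpn 1]
  have T2 : (∑ x : Fin n, ∑ z : Fin k,
      (if (x, v, z).2.1.val = (x, v, z).2.2.val ∧ (x, v, z).2.1.val < p then (1:ℝ) else 0)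
        * (if p ≤ (x, v, z).1.val then A else 0))
      = (if v.val < p then (1:ℝ) else 0) * (((n:ℝ) - p) * A) := by
    simp only []
    have inner : ∀ x : Fin n, (∑ z : Fin k,
        (if v.val = z.val ∧ v.val < p then (1:ℝ) else 0) * (if p ≤ x.val then A else 0))
        = (if v.val < p then (1:ℝ) else 0) * (if p ≤ x.val then A else 0) := by
      intro x; rw [← Finset.sum_mul, bm_sum_delta_guard' k p v.val hpk 1]
    rw [Finset.sum_congr rfl (fun x _ => inner x), ← Finset.mul_sum, bm_sum_if_ge n p hpn A]
  have T3 : (∑ x : Fin n, ∑ z : Fin k,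
      (if (x, v, z).1.val = (x, v, z).2.2.val ∧ (x, v, z).1.val < p then (1:ℝ) else 0)
        * (if p ≤ (x, v, z).2.1.val then A else 0))
      = (if p ≤ v.val then A else 0) * p := by
    simp only []
    have : ∀ x : Fin n, ∀ z : Fin k,
        (if x.val = z.val ∧ x.val < p then (1:ℝ) else 0) * (if p ≤ v.val then A else 0)
        = (if x.val = z.val ∧ x.val < p then (if p ≤ v.val then A else 0) else 0) := by
      intro x z; by_cases h : x.val = z.val ∧ x.val < p
      · rw [if_pos h, if_pos h, one_mul]
      · rw [if_neg h, if_neg h, zero_mul]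
    rw [Finset.sum_congr rfl (fun x _ => Finset.sum_congr rfl (fun z _ => this x z))]
    rw [bm_sum_pair n k p hpn hpk]
    ring
  rw [T1, T2, T3]
  by_cases hv : v.val < p
  · rw [if_pos hv, if_neg (by omega)]
    rw [← hI]; ring
  · rw [if_neg hv, if_pos (by omega)]
    ring

/-- z-marginal -/
lemma bm_degZ (hpn : p ≤ n) (hpk : p ≤ k)
    (hII : (p:ℝ) * C' + 2 * ((n:ℝ) - p) * A = p * C) (u : Fin k) :
    (∑ e : Fin n × Fin n × Fin k, if e.2.2 = u then bmW p A C C' e else 0) = p * C := by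
  rw [Fintype.sum_prod_type]
  have step0 : ∀ x : Fin n, (∑ yz : Fin n × Fin k, if (x, yz).2.2 = u then bmW p A C C' (x, yz) else 0)
      = ∑ y : Fin n, bmW p A C C' (x, y, u) := by
    intro x
    rw [Fintype.sum_prod_type]
    refine Finset.sum_congr rfl (fun y _ => ?_)
    have : ∀ z : Fin k, (if (x, y, z).2.2 = u then bmW p A C C' (x, y, z) else 0)
        = if z = u then bmW p A C C' (x, y, z) else 0 := by intro z; rfl
    rw [Finset.sum_congr rfl (fun z _ => this z), Finset.sum_ite_eq' Finset.univ u, if_pos (Finset.mem_univ u)]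
  rw [Finset.sum_congr rfl (fun x _ => step0 x)]
  unfold bmW
  simp only [Finset.sum_add_distrib]
  have T1 : (∑ x : Fin n, ∑ y : Fin n,
      (if (x, y, u).1.val = (x, y, u).2.1.val ∧ (x, y, u).1.val < p then (1:ℝ) else 0)
        * (if (x, y, u).2.2.val < p then C' else C))
      = (p:ℝ) * (if u.val < p then C' else C) := by
    simp only []
    have : ∀ x : Fin n, ∀ y : Fin n,
        (if x.val = y.val ∧ x.val < p then (1:ℝ) else 0) * (if u.val < p then C' else C)
        = (if x.val = y.val ∧ x.val < p then (if u.val < p then C' else C) else 0) := by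
      intro x y; by_cases h : x.val = y.val ∧ x.val < p
      · rw [if_pos h, if_pos h, one_mul]
      · rw [if_neg h, if_neg h, zero_mul]
    rw [Finset.sum_congr rfl (fun x _ => Finset.sum_congr rfl (fun y _ => this x y))]
    rw [bm_sum_pair n n p hpn hpn]
  have T2 : (∑ x : Fin n, ∑ y : Fin n,
      (if (x, y, u).2.1.val = (x, y, u).2.2.val ∧ (x, y, u).2.1.val < p then (1:ℝ) else 0)
        * (if p ≤ (x, y, u).1.val then A else 0))
      = (if u.val < p then (1:ℝ) else 0) * (((n:ℝ) - p) * A) := by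
    simp only []
    have inner : ∀ x : Fin n, (∑ y : Fin n,
        (if y.val = u.val ∧ y.val < p then (1:ℝ) else 0) * (if p ≤ x.val then A else 0))
        = (if u.val < p then (1:ℝ) else 0) * (if p ≤ x.val then A else 0) := by
      intro x
      rw [← Finset.sum_mul]
      congr 1
      have e1 : ∀ y : Fin n, (if y.val = u.val ∧ y.val < p then (1:ℝ) else 0)
          = (if y.val = u.val ∧ u.val < p then (1:ℝ) else 0) := by
        intro y
        by_cases h : y.val = u.val
        · simp [h]
        · rw [if_neg (fun hc => h hc.1), if_neg (fun hc => h hc.1)]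
      rw [Finset.sum_congr rfl (fun y _ => e1 y), bm_sum_delta_guard n p u.val hpn 1]
    rw [Finset.sum_congr rfl (fun x _ => inner x), ← Finset.mul_sum, bm_sum_if_ge n p hpn A]
  have T3 : (∑ x : Fin n, ∑ y : Fin n,
      (if (x, y, u).1.val = (x, y, u).2.2.val ∧ (x, y, u).1.val < p then (1:ℝ) else 0)
        * (if p ≤ (x, y, u).2.1.val then A else 0))
      = (if u.val < p then (1:ℝ) else 0) * (((n:ℝ) - p) * A) := by
    simp only []
    have inner : ∀ x : Fin n, (∑ y : Fin n,
        (if x.val = u.val ∧ x.val < p then (1:ℝ) else 0) * (if p ≤ y.val then A else 0))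
        = (if x.val = u.val ∧ x.val < p then (1:ℝ) else 0) * (((n:ℝ) - p) * A) := by
      intro x; rw [← Finset.mul_sum, bm_sum_if_ge n p hpn A]
    rw [Finset.sum_congr rfl (fun x _ => inner x), ← Finset.sum_mul]
    congr 1
    have e1 : ∀ x : Fin n, (if x.val = u.val ∧ x.val < p then (1:ℝ) else 0)
        = (if x.val = u.val ∧ u.val < p then (1:ℝ) else 0) := by
      intro x
      by_cases h : x.val = u.val
      · simp [h]
      · rw [if_neg (fun hc => h hc.1), if_neg (fun hc => h hc.1)]
    rw [Finset.sum_congr rfl (fun x _ => e1 x), bm_sum_delta_guard n p u.val hpn 1]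
  rw [T1, T2, T3]
  by_cases hu : u.val < p
  · rw [if_pos hu, if_pos hu]
    rw [← hII]; ring
  · rw [if_neg hu, if_neg hu]
    ring

end Construction

/-- For `n ≥ 1` and real `r ≥ 1` such that `2r`, `rn` and `2rn/(2r+1)` are all
integers: for every integer `k` with `2rn/(2r+1) ≤ k ≤ rn` there is an
`(n,n,k)`-fractionally balanced tripartite hypergraph with matching number
at most `2rn/(2r+1)`. -/
theorem bm_upper_n_n_k (n : ℕ) (hn : 1 ≤ n) (r : ℝ) (hr : 1 ≤ r)
    (s c p : ℕ) (hs : (s : ℝ) = 2 * r) (hc : (c : ℝ) = r * n)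
    (hp : (p : ℝ) = 2 * r * n / (2 * r + 1))
    (k : ℕ) (hpk : p ≤ k) (hkc : k ≤ c) :
    ∃ H : Finset (Fin n × Fin n × Fin k), TriFracBalanced H ∧
      ∀ M, TriMatching H M → M.card ≤ p := by
  -- basic positivity facts
  have hr0 : (0:ℝ) < r := lt_of_lt_of_le one_pos hr
  have hn0R : (0:ℝ) < n := by exact_mod_cast hn
  have h2r1 : (0:ℝ) < 2 * r + 1 := by linarith
  have hpR : (0:ℝ) < p := by rw [hp]; positivity
  have hp0 : 0 < p := by exact_mod_cast hpR
  have hpltnR : (p:ℝ) < n := by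
    rw [hp, div_lt_iff₀ h2r1]; nlinarith
  have hpltn : p < n := by exact_mod_cast hpltnR
  have hpn : p ≤ n := le_of_lt hpltn
  have hk0 : 0 < k := lt_of_lt_of_le hp0 hpk
  have hk0R : (0:ℝ) < k := by exact_mod_cast hk0
  have hkR : (k:ℝ) ≤ r * n := by rw [← hc]; exact_mod_cast hkc
  have hpne : (p:ℝ) ≠ 0 := ne_of_gt hpR
  have hnne : (n:ℝ) ≠ 0 := ne_of_gt hn0R
  have hkne : (k:ℝ) ≠ 0 := ne_of_gt hk0R
  -- the weights
  set A : ℝ := 1 / ((p:ℝ) * n) with hA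
  set C : ℝ := 1 / ((p:ℝ) * k) with hCdef
  set C' : ℝ := (1/(k:ℝ) + 2/(n:ℝ) - 2/(p:ℝ)) / p with hC'def
  have hA0 : 0 ≤ A := by positivity
  have hC0 : 0 ≤ C := by positivity
  have hC'0 : 0 ≤ C' := by
    have e2p : 2/(p:ℝ) = (2*r+1)/(r*n) := by
      rw [hp]; field_simp
    have e2n : 2/(n:ℝ) = 2*r/(r*n) := by
      field_simp
    have hrn0 : (0:ℝ) < r * n := by positivity
    have h1k : 1/(r*n) ≤ 1/(k:ℝ) := by
      apply one_div_le_one_div_of_le hk0R hkR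
    have : (0:ℝ) ≤ 1/(k:ℝ) + 2/(n:ℝ) - 2/(p:ℝ) := by
      rw [e2p, e2n]
      have : (2*r+1)/(r*n) - 2*r/(r*n) = 1/(r*n) := by field_simp; ring
      linarith [this]
    exact div_nonneg this (le_of_lt hpR)
  have hI : (p:ℝ) * C' + ((k:ℝ) - p) * C + ((n:ℝ) - p) * A = p * A := by
    rw [hA, hCdef, hC'def]; field_simp; ring
  have hII : (p:ℝ) * C' + 2 * ((n:ℝ) - p) * A = p * C := by
    rw [hA, hCdef, hC'def]; field_simp; ring
  refine ⟨bmH p n k, ⟨bmW p A C C', ⟨bmW_nonneg p A C C' hA0 hC0 hC'0,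
      fun e he => bmW_vanish p A C C' e he, ?_, ?_, ?_⟩, ?_⟩, ?_⟩
  · intro v w
    rw [bm_degX p A C C' hpn hpk hI v, bm_degX p A C C' hpn hpk hI w]
  · intro v w
    rw [bm_degY p A C C' hpn hpk hI v, bm_degY p A C C' hpn hpk hI w]
  · intro v w
    rw [bm_degZ p A C C' hpn hpk hII v, bm_degZ p A C C' hpn hpk hII w]
  · -- nonzero
    intro h0
    have hApos : (0:ℝ) < A := by rw [hA]; positivity
    have hz := congrFun h0 ((⟨p, hpltn⟩ : Fin n), (⟨0, lt_of_lt_of_le Nat.one_pos hn⟩ : Fin n),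
        (⟨0, hk0⟩ : Fin k))
    simp only [Pi.zero_apply] at hz
    simp [bmW, hp0, Nat.pos_iff_ne_zero] at hz
    linarith
  · -- matching bound
    intro M hM
    obtain ⟨hMH, hMd⟩ := hM
    set F : Fin n × Fin n × Fin k → ℕ := fun e =>
      if e.1.val = e.2.1.val ∧ e.1.val < p then e.1.val
      else if e.2.1.val = e.2.2.val ∧ e.2.1.val < p then e.2.1.val
      else e.1.val with hFdef
    have hF : ∀ e ∈ M, F e < p ∧
        ((e.1.val = F e ∧ e.2.1.val = F e) ∨ (e.2.1.val = F e ∧ e.2.2.val = F e) ∨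
          (e.1.val = F e ∧ e.2.2.val = F e)) := by
      intro e he
      have heH := hMH he
      rw [bmH, Finset.mem_filter] at heH
      obtain ⟨-, hcl⟩ := heH
      rw [hFdef]
      simp only []
      by_cases h1 : e.1.val = e.2.1.val ∧ e.1.val < p
      · rw [if_pos h1]
        exact ⟨h1.2, Or.inl ⟨rfl, h1.1.symm⟩⟩
      · rw [if_neg h1]
        by_cases h2 : e.2.1.val = e.2.2.val ∧ e.2.1.val < p
        · rw [if_pos h2]
          exact ⟨h2.2, Or.inr (Or.inl ⟨rfl, h2.1.symm⟩)⟩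
        · rw [if_neg h2]
          have h3 := (hcl.resolve_left h1).resolve_left h2
          exact ⟨h3.2, Or.inr (Or.inr ⟨rfl, h3.1.symm⟩)⟩
    have hcard : M.card ≤ (Finset.range p).card := by
      apply Finset.card_le_card_of_injOn F
      · intro e he
        exact Finset.mem_range.mpr (hF e he).1
      · intro e he' f hf' hef
        have he : e ∈ M := he'
        have hf : f ∈ M := hf'
        by_contra hne
        obtain ⟨d1, d2, d3⟩ := hMd e he f hf hne
        have n1 : e.1.val ≠ f.1.val := fun h => d1 (Fin.val_injective h)
        have n2 : e.2.1.val ≠ f.2.1.val := fun h => d2 (Fin.val_injective h)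
        have n3 : e.2.2.val ≠ f.2.2.val := fun h => d3 (Fin.val_injective h)
        have ve := (hF e he).2
        have vf := (hF f hf).2
        omega
    simpa using hcard
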